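/- Let G be a quantitative reachability game with players P = {0,1,…,t} and initial vertex v_0. A play π from v_0 is the outcome of a σ_0-fixed Nash equilibrium for some strategy σ_0 of player 0 if and only if π is Visit Val*-consistent for P∖{0}, i.e., for every player i ∈ P∖{0} and every n ∈ ℕ, if π_n ∈ V_i and i ∉ Visit(π_0⋯π_{n−1}), then cost_i(π_nπ_{n+1}⋯) ≤ Val_i(π_n). -/

import Mathlib

open scoped Classical

/-- An infinite play in the graph with edge relation `E`. -/
def IsPlay {V : Type*} (E : V → V → Prop) (π : ℕ → V) : Prop :=
  ∀ k, E (π k) (π (k + 1))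

/-- The history `π 0, …, π k` as a list. -/
def histList {V : Type*} (π : ℕ → V) (k : ℕ) : List V :=
  (List.range (k + 1)).map π

/-- The accumulated weight of the first `n` edges of `π`. -/
def pathWeight {V : Type*} (w : V → V → ℕ) (π : ℕ → V) (n : ℕ) : ℕ :=
  ∑ j ∈ Finset.range n, w (π j) (π (j + 1))

/-- The cost of a play for weight function `w` and target set `T`. -/
noncomputable def cost {V : Type*} (w : V → V → ℕ) (T : Set V) (π : ℕ → V) : ℕ∞ :=
  if h : ∃ n, π n ∈ T then (pathWeight w π (Nat.find h) : ℕ∞) else ⊤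

/-- `σ` is a strategy for player `i` in a game where `own v` is the owner of `v`. -/
def IsStrategyFor {V P : Type*} (E : V → V → Prop) (own : V → P) (i : P)
    (σ : List V → V) : Prop :=
  ∀ (l : List V) (u : V), List.Chain' E (l ++ [u]) → own u = i → E u (σ (l ++ [u]))

/-- A play is consistent with the strategy `σ` of player `i`. -/
def ConsistentFor {V P : Type*} (own : V → P) (i : P) (σ : List V → V)
    (π : ℕ → V) : Prop :=
  ∀ k, own (π k) = i → π (k + 1) = σ (histList π k)

/-- A play is the outcome of the strategy profile `σ`: at each step the owner's
strategy chooses the next vertex. -/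
def ProfConsistent {V P : Type*} (own : V → P) (σ : P → List V → V)
    (π : ℕ → V) : Prop :=
  ∀ k, π (k + 1) = σ (own (π k)) (histList π k)

/-- The value `Val_i(v)` of vertex `v` for player `i` against the coalition of the
other players: the inf over strategies of player `i` of the sup of the costs of the
plays from `v` consistent with that strategy. -/
noncomputable def Val {V P : Type*} (E : V → V → Prop) (own : V → P)
    (w : P → V → V → ℕ) (T : P → Set V) (i : P) (v : V) : ℕ∞ :=
  ⨅ σ : {σ : List V → V // IsStrategyFor E own i σ},
    ⨆ π : {π : ℕ → V // IsPlay E π ∧ π 0 = v ∧ ConsistentFor own i σ.1 π},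
      cost (w i) (T i) π.1

/-- `π` is Visit `Val*`-consistent for the set `I` of players. -/
def VisitValConsistent {V P : Type*} (E : V → V → Prop) (own : V → P)
    (w : P → V → V → ℕ) (T : P → Set V) (I : Set P) (π : ℕ → V) : Prop :=
  ∀ i ∈ I, ∀ n, own (π n) = i → (¬ ∃ k < n, π k ∈ T i) →
    cost (w i) (T i) (fun m => π (n + m)) ≤ Val E own w T i (π n)

/-- `σ` is a `σ 0`-fixed Nash equilibrium with outcome `π` from `v0`: no player
`i ≠ 0` can strictly decrease his cost by unilaterally deviating. -/
def IsNE {V : Type*} {t : ℕ} (E : V → V → Prop) (own : V → Fin (t + 1))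
    (w : Fin (t + 1) → V → V → ℕ) (T : Fin (t + 1) → Set V) (v0 : V)
    (σ : Fin (t + 1) → List V → V) (π : ℕ → V) : Prop :=
  (∀ i, IsStrategyFor E own i (σ i)) ∧ IsPlay E π ∧ π 0 = v0 ∧
    ProfConsistent own σ π ∧
    ∀ i : Fin (t + 1), i ≠ 0 → ∀ τ : List V → V, IsStrategyFor E own i τ →
      ∀ π' : ℕ → V, IsPlay E π' → π' 0 = v0 →
        ProfConsistent own (Function.update σ i τ) π' →
        cost (w i) (T i) π ≤ cost (w i) (T i) π'

section lists
variable {V : Type*} (π π' : ℕ → V)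

lemma histList_length (k : ℕ) : (histList π k).length = k + 1 := by
  simp [histList]

lemma histList_succ (k : ℕ) : histList π (k + 1) = histList π k ++ [π (k + 1)] := by
  simp [histList, List.range_succ]

lemma histList_zero : histList π 0 = [π 0] := by
  simp [histList, List.range_succ]

lemma histList_getLastD (k : ℕ) (d : V) : (histList π k).getLastD d = π k := by
  cases k with
  | zero => simp [histList_zero]
  | succ k => simp [histList_succ]

lemma histList_getElem (k j : ℕ) (hj : j < k + 1) :
    (histList π k)[j]'(by simpa [histList_length] using hj) = π j := by
  simp [histList]

lemma histList_take (m k : ℕ) (h : m ≤ k) :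
    (histList π k).take (m + 1) = histList π m := by
  simp [histList, ← List.map_take, List.take_range, Nat.min_eq_left (by omega : m + 1 ≤ k + 1)]

lemma histList_drop (n k : ℕ) :
    (histList π (n + k)).drop n = histList (fun s => π (n + s)) k := by
  have h1 : n + k + 1 = n + (k + 1) := by omega
  rw [histList, h1, List.range_add, List.map_append]
  rw [List.drop_left' (by simp)]
  simp [histList, List.map_map, Function.comp_def]

lemma histList_congr (k : ℕ) (h : ∀ j ≤ k, π j = π' j) : histList π k = histList π' k := by
  apply List.ext_getElem (by simp [histList_length])
  intro j hj hj'
  have hjk : j < k + 1 := by simpa [histList_length] using hj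
  rw [histList_getElem π k j hjk, histList_getElem π' k j hjk]
  exact h j (by omega)

lemma histList_eq_iff {k k' : ℕ} :
    histList π k = histList π' k' ↔ k = k' ∧ ∀ j ≤ k, π j = π' j := by
  constructor
  · intro h
    have hk : k = k' := by
      have := congrArg List.length h
      simpa [histList_length] using this
    subst hk
    refine ⟨rfl, fun j hj => ?_⟩
    have h1 : (histList π k)[j]'(by simp [histList_length]; omega) = π j :=
      histList_getElem π k j (by omega)
    have h2 : (histList π' k)[j]'(by simp [histList_length]; omega) = π' j :=
      histList_getElem π' k j (by omega)
    rw [← h1, ← h2]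
    exact List.getElem_of_eq h _
  · rintro ⟨rfl, h⟩
    exact histList_congr π π' k h

lemma chain'_histList {E : V → V → Prop} {π : ℕ → V} (hπ : IsPlay E π) (k : ℕ) :
    List.Chain' E (histList π k) := by
  rw [histList]; show List.IsChain E _; rw [List.isChain_map]
  exact (List.isChain_range_succ (fun a b => E (π a) (π b)) k).2 fun m _ => hπ m

end lists

section costlemmas
variable {V : Type*} (w : V → V → ℕ) (T : Set V)

lemma cost_eq_zero {π : ℕ → V} (h : π 0 ∈ T) : cost w T π = 0 := by
  have hex : ∃ n, π n ∈ T := ⟨0, h⟩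
  rw [cost, dif_pos hex, Nat.find_eq_zero hex |>.2 h]
  simp [pathWeight]

lemma cost_step {π : ℕ → V} (h0 : π 0 ∉ T) :
    cost w T π = (w (π 0) (π 1) : ℕ∞) + cost w T (fun m => π (1 + m)) := by
  by_cases hex : ∃ n, π n ∈ T
  · have hn : Nat.find hex ≠ 0 := fun h => h0 (by simpa [h] using Nat.find_spec hex)
    set n := Nat.find hex with hndef
    have hex' : ∃ m, π (1 + m) ∈ T := ⟨n - 1, by
      have : 1 + (n - 1) = n := by omega
      rw [this]; exact Nat.find_spec hex⟩
    have hfind' : Nat.find hex' = n - 1 := by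
      apply le_antisymm
      · exact Nat.find_le (by
          have : 1 + (n - 1) = n := by omega
          rw [this]; exact Nat.find_spec hex)
      · rw [Nat.le_find_iff]
        intro m hm hmem
        exact Nat.find_min hex (by omega : 1 + m < n) hmem
    rw [cost, cost, dif_pos hex, dif_pos hex', hfind', ← hndef]
    have hsum : pathWeight w π n
        = w (π 0) (π 1) + pathWeight w (fun m => π (1 + m)) (n - 1) := by
      have hn1 : n = (n - 1) + 1 := by omega
      rw [pathWeight, hn1, Finset.sum_range_succ']
      rw [add_comm]
      congr 1
      apply Finset.sum_congr rfl
      intro j _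
      exact congrArg₂ w (congrArg π (by omega)) (congrArg π (by omega))
    rw [hsum]
    push_cast
    ring
  · have hex' : ¬ ∃ m, π (1 + m) ∈ T := fun ⟨m, hm⟩ => hex ⟨1 + m, hm⟩
    rw [cost, cost, dif_neg hex, dif_neg hex']
    simp

lemma cost_prefix {π : ℕ → V} (n : ℕ) (h : ∀ k < n, π k ∉ T) :
    cost w T π = (pathWeight w π n : ℕ∞) + cost w T (fun m => π (n + m)) := by
  induction n generalizing π with
  | zero =>
    simp only [pathWeight, Finset.range_zero, Finset.sum_empty, Nat.cast_zero, zero_add,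
      Nat.zero_add]
  | succ n ih =>
    have h0 : π 0 ∉ T := h 0 (by omega)
    rw [cost_step w T h0, ih (π := fun m => π (1 + m)) (fun k hk =>
      h (1 + k) (by omega))]
    have hshift : (fun m => π (1 + (n + m))) = (fun m => π (n + 1 + m)) := by
      funext m; congr 1; omega
    rw [hshift]
    have hpw : pathWeight w π (n + 1)
        = w (π 0) (π 1) + pathWeight w (fun m => π (1 + m)) n := by
      rw [pathWeight, Finset.sum_range_succ', add_comm]
      congr 1
      apply Finset.sum_congr rfl
      intro j _
      exact congrArg₂ w (congrArg π (by omega)) (congrArg π (by omega))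
    rw [hpw]
    push_cast
    ring

lemma pathWeight_congr {π π' : ℕ → V} {n m : ℕ} (hm : m ≤ n) (hag : ∀ j ≤ n, π' j = π j) :
    pathWeight w π' m = pathWeight w π m := by
  apply Finset.sum_congr rfl
  intro j hj
  rw [Finset.mem_range] at hj
  rw [hag j (by omega), hag (j + 1) (by omega)]

lemma cost_eq_of_agree {π π' : ℕ → V} {n : ℕ} (hag : ∀ j ≤ n, π' j = π j)
    (hhit : ∃ k ≤ n, π k ∈ T) : cost w T π' = cost w T π := by
  obtain ⟨k0, hk0n, hk0⟩ := hhit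
  have hex : ∃ m, π m ∈ T := ⟨k0, hk0⟩
  have hfn : Nat.find hex ≤ n := le_trans (Nat.find_le hk0) hk0n
  have hex' : ∃ m, π' m ∈ T := ⟨Nat.find hex, by rw [hag _ hfn]; exact Nat.find_spec hex⟩
  have hff : Nat.find hex' = Nat.find hex := by
    apply le_antisymm
    · exact Nat.find_le (by rw [hag _ hfn]; exact Nat.find_spec hex)
    · rw [Nat.le_find_iff]
      intro m hm hmem
      exact Nat.find_min hex hm (by rw [← hag m (by omega)]; exact hmem)
  rw [cost, cost, dif_pos hex, dif_pos hex', hff,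
    pathWeight_congr w hfn hag]
end costlemmas

section punish
variable {V : Type*} {P : Type*}
variable (E : V → V → Prop) (own : V → P) (i : P) (wi : V → V → ℕ) (Ti : Set V)

noncomputable def Yit : ℕ → V → ℕ∞
  | 0 => fun v => if v ∈ Ti then 0 else ⊤
  | (k+1) => fun v =>
      if v ∈ Ti then 0
      else if own v = i then ⨅ u : {u // E v u}, ((wi v u.1 : ℕ∞) + Yit k u.1)
      else ⨆ u : {u // E v u}, ((wi v u.1 : ℕ∞) + Yit k u.1)

lemma Yit_mem (k : ℕ) (v : V) (h : v ∈ Ti) : Yit E own i wi Ti k v = 0 := by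
  cases k <;> simp [Yit, h]

lemma Yit_succ_le (k : ℕ) (v : V) :
    Yit E own i wi Ti (k + 1) v ≤ Yit E own i wi Ti k v := by
  induction k generalizing v with
  | zero =>
    by_cases h : v ∈ Ti
    · simp [Yit, h]
    · simp [Yit, h]
  | succ k ih =>
    by_cases h : v ∈ Ti
    · simp [Yit, h]
    · by_cases ho : own v = i
      · simp only [Yit, if_neg h, if_pos ho]
        exact iInf_mono fun u => add_le_add_right (ih u.1) _
      · simp only [Yit, if_neg h, if_neg ho]
        exact iSup_mono fun u => add_le_add_right (ih u.1) _

lemma Yit_antitone {k k' : ℕ} (h : k ≤ k') (v : V) :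
    Yit E own i wi Ti k' v ≤ Yit E own i wi Ti k v := by
  induction k' with
  | zero => simp_all
  | succ k' ih =>
    rcases Nat.lt_or_ge k (k' + 1) with h' | h'
    · exact le_trans (Yit_succ_le E own i wi Ti k' v) (ih (by omega))
    · have : k = k' + 1 := by omega
      subst this; rfl

lemma Yit_stab [Fintype V] :
    ∃ N, ∀ k, N ≤ k → ∀ v, Yit E own i wi Ti k v = Yit E own i wi Ti N v := by
  have hv : ∀ v : V, ∃ Nv, ∀ k, Nv ≤ k → Yit E own i wi Ti k v = Yit E own i wi Ti Nv v := by
    intro v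
    obtain ⟨m, ⟨n0, hn0⟩, hmin⟩ := wellFounded_lt.has_min
      (Set.range fun k => Yit E own i wi Ti k v) ⟨_, ⟨0, rfl⟩⟩
    refine ⟨n0, fun k hk => ?_⟩
    have h1 : Yit E own i wi Ti k v ≤ Yit E own i wi Ti n0 v :=
      Yit_antitone E own i wi Ti hk v
    have hn0' : Yit E own i wi Ti n0 v = m := hn0
    exact le_antisymm h1 (not_lt.1 (hn0' ▸ hmin _ ⟨k, rfl⟩))
  choose Nv hNv using hv
  refine ⟨Finset.univ.sup Nv, fun k hk v => ?_⟩
  have hle : Nv v ≤ Finset.univ.sup Nv := Finset.le_sup (Finset.mem_univ v)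
  rw [hNv v k (le_trans hle hk), hNv v _ hle]
end punish

lemma shift_shift {V : Type*} (ρ : ℕ → V) (m : ℕ) :
    (fun s => (fun s' => ρ (m + s')) (1 + s)) = (fun s => ρ (m + 1 + s)) := by
  funext s; exact congrArg ρ (by omega)

lemma exists_punish {V : Type*} [Fintype V] {P : Type*} (E : V → V → Prop)
    (hE : ∀ u, ∃ v, E u v) (own : V → P) (w : P → V → V → ℕ) (T : P → Set V) (i : P) :
    ∃ (X : V → ℕ∞) (f : V → V),
      (∀ v, Val E own w T i v ≤ X v) ∧ (∀ v, E v (f v)) ∧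
      (∀ v u, v ∉ T i → own v = i → E v u → X v ≤ (w i v u : ℕ∞) + X u) ∧
      (∀ ρ : ℕ → V, IsPlay E ρ → (∀ k, own (ρ k) ≠ i → ρ (k + 1) = f (ρ k)) →
        X (ρ 0) ≤ cost (w i) (T i) ρ) := by
  rcases isEmpty_or_nonempty V with hVe | hVn
  · exact ⟨fun v => 0, fun v => v, fun v => isEmptyElim v, fun v => isEmptyElim v,
      fun v => isEmptyElim v, fun ρ _ _ => isEmptyElim (ρ 0)⟩
  have hne : ∀ v : V, Nonempty {u // E v u} := fun v =>
    ⟨⟨(hE v).choose, (hE v).choose_spec⟩⟩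
  set Y := Yit E own i (w i) (T i) with hYdef
  obtain ⟨N, hN⟩ := Yit_stab E own i (w i) (T i)
  set X := Y N with hXdef
  -- basic facts about X
  have hX0 : ∀ v ∈ T i, X v = 0 := fun v hv => Yit_mem E own i (w i) (T i) N v hv
  have hfixmin : ∀ v, v ∉ T i → own v = i →
      X v = ⨅ u : {u // E v u}, ((w i v u.1 : ℕ∞) + X u.1) := by
    intro v hv ho
    have h1 : X v = Y (N + 1) v := (hN (N + 1) (by omega) v).symm
    rw [h1, hYdef]
    show Yit E own i (w i) (T i) (N + 1) v = _
    simp only [Yit, if_neg hv, if_pos ho]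
    rfl
  have hfixmax : ∀ v, v ∉ T i → own v ≠ i →
      X v = ⨆ u : {u // E v u}, ((w i v u.1 : ℕ∞) + X u.1) := by
    intro v hv ho
    have h1 : X v = Y (N + 1) v := (hN (N + 1) (by omega) v).symm
    rw [h1, hYdef]
    show Yit E own i (w i) (T i) (N + 1) v = _
    simp only [Yit, if_neg hv, if_neg ho]
    rfl
  have hBell : ∀ v u, v ∉ T i → own v = i → E v u → X v ≤ (w i v u : ℕ∞) + X u := by
    intro v u hv ho hvu
    rw [hfixmin v hv ho]
    exact iInf_le _ (⟨u, hvu⟩ : {u // E v u})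
  -- the punishing positional strategy
  have hmax : ∀ v : V, ∃ u, E v u ∧ ∀ u', E v u' →
      (w i v u' : ℕ∞) + X u' ≤ (w i v u : ℕ∞) + X u := by
    intro v
    obtain ⟨u0, hu0⟩ := Finite.exists_max (fun u : {u // E v u} => (w i v u.1 : ℕ∞) + X u.1)
    exact ⟨u0.1, u0.2, fun u' hu' => hu0 ⟨u', hu'⟩⟩
  choose f hfE hfmax using hmax
  -- punishment property
  have hPun : ∀ ρ : ℕ → V, IsPlay E ρ → (∀ k, own (ρ k) ≠ i → ρ (k + 1) = f (ρ k)) →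
      X (ρ 0) ≤ cost (w i) (T i) ρ := by
    intro ρ hplay hcoal
    have claim : ∀ n, (∀ k < n, ρ k ∉ T i) →
        X (ρ 0) ≤ (pathWeight (w i) ρ n : ℕ∞) + X (ρ n) := by
      intro n
      induction n with
      | zero => intro _; simp [pathWeight]
      | succ n ih =>
        intro hno
        have h1 : X (ρ 0) ≤ (pathWeight (w i) ρ n : ℕ∞) + X (ρ n) :=
          ih fun k hk => hno k (by omega)
        have hρn : ρ n ∉ T i := hno n (by omega)
        have h2 : X (ρ n) ≤ (w i (ρ n) (ρ (n + 1)) : ℕ∞) + X (ρ (n + 1)) := by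
          by_cases ho : own (ρ n) = i
          · exact hBell _ _ hρn ho (hplay n)
          · rw [hfixmax _ hρn ho]
            have := hfmax (ρ n) (ρ (n + 1)) (hplay n)
            calc (⨆ u : {u // E (ρ n) u}, ((w i (ρ n) u.1 : ℕ∞) + X u.1))
                ≤ (w i (ρ n) (f (ρ n)) : ℕ∞) + X (f (ρ n)) :=
                  iSup_le fun u => hfmax (ρ n) u.1 u.2
              _ = (w i (ρ n) (ρ (n + 1)) : ℕ∞) + X (ρ (n + 1)) := by
                  rw [hcoal n ho]
        have hpw : (pathWeight (w i) ρ (n + 1) : ℕ∞)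
            = (pathWeight (w i) ρ n : ℕ∞) + (w i (ρ n) (ρ (n + 1)) : ℕ∞) := by
          have hh : pathWeight (w i) ρ (n + 1)
              = pathWeight (w i) ρ n + w i (ρ n) (ρ (n + 1)) := Finset.sum_range_succ _ n
          rw [hh]; push_cast; rfl
        calc X (ρ 0) ≤ (pathWeight (w i) ρ n : ℕ∞) + X (ρ n) := h1
          _ ≤ (pathWeight (w i) ρ n : ℕ∞) + ((w i (ρ n) (ρ (n + 1)) : ℕ∞) + X (ρ (n + 1))) :=
              add_le_add_right h2 _
          _ = (pathWeight (w i) ρ (n + 1) : ℕ∞) + X (ρ (n + 1)) := by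
              rw [hpw, add_assoc]
    by_cases hex : ∃ n, ρ n ∈ T i
    · have hfind := Nat.find_spec hex
      have h1 := claim (Nat.find hex) fun k hk => Nat.find_min hex hk
      rw [cost, dif_pos hex]
      rw [hX0 _ hfind, add_zero] at h1
      exact h1
    · rw [cost, dif_neg hex]; exact le_top
  -- the minimizing strategy for player i
  have hmin : ∀ (v : V) (k : ℕ), ∃ u, E v u ∧ ∀ u', E v u' →
      (w i v u : ℕ∞) + Y k u ≤ (w i v u' : ℕ∞) + Y k u' := by
    intro v k
    obtain ⟨u0, hu0⟩ := Finite.exists_min (fun u : {u // E v u} => (w i v u.1 : ℕ∞) + Y k u.1)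
    exact ⟨u0.1, u0.2, fun u' hu' => hu0 ⟨u', hu'⟩⟩
  choose msucc hmE hmMin using hmin
  set d : V := Classical.arbitrary V with hddef
  set σmin : List V → V := fun l => msucc (l.getLastD d) (N - l.length) with hσdef
  have hstrat : IsStrategyFor E own i σmin := by
    intro l u _ _
    rw [hσdef]
    simp only [List.getLastD_concat]
    exact hmE u _
  have claim2 : ∀ (j m : ℕ) (ρ : ℕ → V), IsPlay E ρ → ConsistentFor own i σmin ρ →
      m + j = N → cost (w i) (T i) (fun s => ρ (m + s)) ≤ Y j (ρ m) := by
    intro j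
    induction j with
    | zero =>
      intro m ρ _ _ hm
      by_cases hmem : ρ m ∈ T i
      · rw [cost_eq_zero _ _ (by simpa using hmem)]
        exact zero_le
      · have : Y 0 (ρ m) = ⊤ := by
          show Yit E own i (w i) (T i) 0 (ρ m) = ⊤
          simp [Yit, hmem]
        rw [this]; exact le_top
    | succ j ih =>
      intro m ρ hplay hcons hm
      by_cases hmem : ρ m ∈ T i
      · rw [cost_eq_zero _ _ (by simpa using hmem)]
        exact zero_le
      · have hstep : cost (w i) (T i) (fun s => ρ (m + s))
            = (w i (ρ m) (ρ (m + 1)) : ℕ∞) + cost (w i) (T i) (fun s => ρ (m + 1 + s)) := by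
          rw [cost_step (w i) (T i) (π := fun s => ρ (m + s)) (by simpa using hmem)]
          rw [shift_shift]
          norm_num
        have hih : cost (w i) (T i) (fun s => ρ (m + 1 + s)) ≤ Y j (ρ (m + 1)) :=
          ih (m + 1) ρ hplay hcons (by omega)
        rw [hstep]
        have h3 : (w i (ρ m) (ρ (m + 1)) : ℕ∞) + cost (w i) (T i) (fun s => ρ (m + 1 + s))
            ≤ (w i (ρ m) (ρ (m + 1)) : ℕ∞) + Y j (ρ (m + 1)) := add_le_add_right hih _
        refine le_trans h3 ?_
        by_cases ho : own (ρ m) = i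
        · have hmove : ρ (m + 1) = msucc (ρ m) j := by
            rw [hcons m ho, hσdef]
            simp only [histList_getLastD, histList_length]
            congr 1
            omega
          have hYval : Y (j + 1) (ρ m)
              = ⨅ u : {u // E (ρ m) u}, ((w i (ρ m) u.1 : ℕ∞) + Y j u.1) := by
            show Yit E own i (w i) (T i) (j + 1) (ρ m) = _
            simp only [Yit, if_neg hmem, if_pos ho]
            rfl
          rw [hYval, hmove]
          exact le_iInf fun u => hmMin (ρ m) j u.1 u.2
        · have hYval : Y (j + 1) (ρ m)
              = ⨆ u : {u // E (ρ m) u}, ((w i (ρ m) u.1 : ℕ∞) + Y j u.1) := by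
            show Yit E own i (w i) (T i) (j + 1) (ρ m) = _
            simp only [Yit, if_neg hmem, if_neg ho]
            rfl
          rw [hYval]
          exact le_iSup_of_le (⟨ρ (m + 1), hplay m⟩ : {u // E (ρ m) u}) (le_refl _)
  have hValX : ∀ v, Val E own w T i v ≤ X v := by
    intro v
    rw [Val]
    refine iInf_le_of_le ⟨σmin, hstrat⟩ (iSup_le ?_)
    rintro ⟨ρ, hplayρ, hρ0, hconsρ⟩
    have h1 := claim2 N 0 ρ hplayρ hconsρ (by omega)
    have h2 : (fun s => ρ (0 + s)) = ρ := funext fun s => by rw [Nat.zero_add]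
    rw [h2, hρ0] at h1
    exact h1
  exact ⟨X, f, hValX, hfE, hBell, hPun⟩

lemma chain'_histList_iff {V : Type*} {E : V → V → Prop} (π : ℕ → V) (k : ℕ) :
    List.Chain' E (histList π k) ↔ ∀ m < k, E (π m) (π (m + 1)) := by
  rw [histList]; show List.IsChain E _ ↔ _; rw [List.isChain_map]
  exact List.isChain_range_succ (fun a b => E (π a) (π b)) k

lemma exists_outcome {V : Type*} {P : Type*} (E : V → V → Prop) (own : V → P)
    (σ : P → List V → V) (hσ : ∀ j, IsStrategyFor E own j (σ j)) (v0 : V) :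
    ∃ ρ : ℕ → V, IsPlay E ρ ∧ ρ 0 = v0 ∧ ProfConsistent own σ ρ := by
  let step : List V × V → List V × V := fun p =>
    (p.1 ++ [p.2], σ (own p.2) (p.1 ++ [p.2]))
  let aux : ℕ → List V × V := fun k => step^[k] ([], v0)
  let ρ : ℕ → V := fun k => (aux k).2
  have haux : ∀ k, aux (k + 1) = step (aux k) := fun k =>
    Function.iterate_succ_apply' step k ([], v0)
  have hρ0 : ρ 0 = v0 := rfl
  have hinv : ∀ k, (aux k).1 ++ [(aux k).2] = histList ρ k := by
    intro k
    induction k with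
    | zero => simp [aux, ρ, histList_zero, hρ0]
    | succ k ih =>
      rw [haux k]
      show ((aux k).1 ++ [(aux k).2]) ++ [σ (own (aux k).2) ((aux k).1 ++ [(aux k).2])]
        = histList ρ (k + 1)
      rw [histList_succ, ih]
      congr 1
      have h2 : ρ (k + 1) = σ (own (ρ k)) ((aux k).1 ++ [(aux k).2]) := by
        show (aux (k + 1)).2 = _
        rw [haux k]
      rw [ih] at h2
      rw [h2]
  have hcons : ProfConsistent own σ ρ := by
    intro k
    have h2 : ρ (k + 1) = σ (own (ρ k)) ((aux k).1 ++ [(aux k).2]) := by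
      show (aux (k + 1)).2 = _
      rw [haux k]
    rw [h2, hinv k]
  have hplay : IsPlay E ρ := by
    intro k
    induction k using Nat.strong_induction_on with
    | _ k ih =>
      have hchain : List.Chain' E (histList ρ k) :=
        (chain'_histList_iff ρ k).2 fun m hm => ih m hm
      have := hσ (own (ρ k)) (aux k).1 (ρ k) (by rw [hinv k]; exact hchain) rfl
      rw [hinv k, ← hcons k] at this
      exact this
  exact ⟨ρ, hplay, hρ0, hcons⟩

theorem forward_dir {V : Type*} [Fintype V] {t : ℕ}
    (E : V → V → Prop) (hE : ∀ u, ∃ v, E u v) (own : V → Fin (t + 1))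
    (w : Fin (t + 1) → V → V → ℕ) (T : Fin (t + 1) → Set V) (v0 : V)
    (π : ℕ → V) (hπ : IsPlay E π) (h0 : π 0 = v0)
    (σ : Fin (t + 1) → List V → V)
    (hstrats : ∀ j, IsStrategyFor E own j (σ j)) (hplayπ : IsPlay E π)
    (hprof : ProfConsistent own σ π)
    (hNE : ∀ i : Fin (t + 1), i ≠ 0 → ∀ τ : List V → V, IsStrategyFor E own i τ →
      ∀ π' : ℕ → V, IsPlay E π' → π' 0 = v0 →
        ProfConsistent own (Function.update σ i τ) π' →
        cost (w i) (T i) π ≤ cost (w i) (T i) π') :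
    VisitValConsistent E own w T {i | i ≠ 0} π := by
  intro i hi n hown hnov
  by_contra hlt'
  have hlt : Val E own w T i (π n) < cost (w i) (T i) (fun m => π (n + m)) := not_le.1 hlt'
  rw [Val, iInf_lt_iff] at hlt
  obtain ⟨⟨σ', hσ'⟩, hsup⟩ := hlt
  obtain ⟨τ, hτdef⟩ : ∃ τ : List V → V, τ = fun l =>
      if l.length ≤ n ∧ ∃ m, l = histList π m then π l.length
      else if n + 1 ≤ l.length ∧ l.take (n + 1) = histList π n then σ' (l.drop n)
      else (hE (l.getLastD v0)).choose := ⟨_, rfl⟩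
  have hτ : IsStrategyFor E own i τ := by
    intro l u hchain howu
    rw [hτdef]
    simp only
    by_cases h1 : (l ++ [u]).length ≤ n ∧ ∃ m, l ++ [u] = histList π m
    · rw [if_pos h1]
      obtain ⟨hlen, m, hm⟩ := h1
      have hu : u = π m := by
        have h3 := congrArg (fun l' => l'.getLastD v0) hm
        simp only [List.getLastD_concat] at h3
        rw [h3, histList_getLastD]
      have hlm : (l ++ [u]).length = m + 1 := by rw [hm, histList_length]
      rw [hlm, hu]
      exact hπ m
    · rw [if_neg h1]
      by_cases h2 : n + 1 ≤ (l ++ [u]).length ∧ (l ++ [u]).take (n + 1) = histList π n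
      · rw [if_pos h2]
        have hlen : n ≤ l.length := by
          have := h2.1
          simp only [List.length_append, List.length_singleton] at this
          omega
        rw [List.drop_append_of_le_length hlen]
        have hsuf : List.Chain' E (l.drop n ++ [u]) := by
          have heq : l.drop n ++ [u] = (l ++ [u]).drop n :=
            (List.drop_append_of_le_length hlen).symm
          rw [heq]
          exact hchain.suffix (List.drop_suffix _ _)
        exact hσ' (l.drop n) u hsuf howu
      · rw [if_neg h2, List.getLastD_concat]
        exact (hE u).choose_spec
  have hupd : ∀ j, IsStrategyFor E own j (Function.update σ i τ j) := by
    intro j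
    by_cases hj : j = i
    · subst hj; rw [Function.update_self]; exact hτ
    · rw [Function.update_of_ne hj]; exact hstrats j
  obtain ⟨π', hplay', hπ'0, hcons'⟩ := exists_outcome E own _ hupd v0
  have hNEi := hNE i hi τ hτ π' hplay' hπ'0 hcons'
  have hag : ∀ j, j ≤ n → π' j = π j := by
    intro j
    induction j using Nat.strong_induction_on with
    | _ j ih =>
      intro hj
      match j with
      | 0 => rw [hπ'0, h0]
      | (k + 1) =>
        have hk : ∀ m ≤ k, π' m = π m := fun m hm => ih m (by omega) (by omega)
        have hh : histList π' k = histList π k := histList_congr _ _ k hk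
        have hc := hcons' k
        rw [hh, hk k le_rfl] at hc
        by_cases hoi : own (π k) = i
        · rw [hoi, Function.update_self, hτdef] at hc
          simp only at hc
          rw [if_pos ⟨by rw [histList_length]; omega, ⟨k, rfl⟩⟩, histList_length] at hc
          exact hc
        · rw [Function.update_of_ne hoi] at hc
          rw [hc, ← hprof k]
  obtain ⟨ρ', hρ'def⟩ : ∃ ρ' : ℕ → V, ρ' = fun m => π' (n + m) := ⟨_, rfl⟩
  have hρ'play : IsPlay E ρ' := by
    intro k
    rw [hρ'def]
    simp only
    rw [show n + (k + 1) = (n + k) + 1 by omega]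
    exact hplay' (n + k)
  have hρ'0 : ρ' 0 = π n := by rw [hρ'def]; simp only [Nat.add_zero]; exact hag n le_rfl
  have hρ'cons : ConsistentFor own i σ' ρ' := by
    intro k hk
    rw [hρ'def] at hk ⊢
    simp only at hk ⊢
    have hc := hcons' (n + k)
    rw [hk, Function.update_self, hτdef] at hc
    simp only at hc
    rw [if_neg (by rw [histList_length]; omega), if_pos ⟨by rw [histList_length]; omega,
      by rw [histList_take π' n (n + k) (by omega)]; exact histList_congr _ _ n hag⟩,
      histList_drop] at hc
    rw [show n + (k + 1) = (n + k) + 1 by omega]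
    exact hc
  have hmem : cost (w i) (T i) ρ' ≤
      ⨆ ρ : {ρ : ℕ → V // IsPlay E ρ ∧ ρ 0 = π n ∧ ConsistentFor own i σ' ρ},
        cost (w i) (T i) ρ.1 :=
    le_iSup_of_le ⟨ρ', hρ'play, hρ'0, hρ'cons⟩ le_rfl
  have hcost' : cost (w i) (T i) ρ' < cost (w i) (T i) (fun m => π (n + m)) :=
    lt_of_le_of_lt hmem hsup
  have hnovπ : ∀ k < n, π k ∉ T i := fun k hk hkT => hnov ⟨k, hk, hkT⟩
  have hdecπ : cost (w i) (T i) π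
      = (pathWeight (w i) π n : ℕ∞) + cost (w i) (T i) (fun m => π (n + m)) :=
    cost_prefix _ _ n hnovπ
  have hnovπ' : ∀ k < n, π' k ∉ T i := fun k hk => by
    rw [hag k (by omega)]; exact hnovπ k hk
  have hdecπ' : cost (w i) (T i) π'
      = (pathWeight (w i) π' n : ℕ∞) + cost (w i) (T i) ρ' := by
    rw [hρ'def]
    exact cost_prefix _ _ n hnovπ'
  have hpw : pathWeight (w i) π' n = pathWeight (w i) π n :=
    pathWeight_congr _ le_rfl hag
  rw [hdecπ, hdecπ', hpw] at hNEi
  have hfin : (↑(pathWeight (w i) π n) : ℕ∞) ≠ ⊤ := by simp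
  have hcontra := WithTop.add_lt_add_left hfin hcost'
  exact absurd hNEi (not_le.2 hcontra)

theorem backward_dir {V : Type*} [Fintype V] {t : ℕ}
    (E : V → V → Prop) (hE : ∀ u, ∃ v, E u v) (own : V → Fin (t + 1))
    (w : Fin (t + 1) → V → V → ℕ) (T : Fin (t + 1) → Set V) (v0 : V)
    (π : ℕ → V) (hπ : IsPlay E π) (h0 : π 0 = v0)
    (hVV : VisitValConsistent E own w T {i | i ≠ 0} π) :
    ∃ σ : Fin (t + 1) → List V → V, IsNE E own w T v0 σ π := by
  choose X f hXVal hfE hBell hPun using fun d : Fin (t + 1) => exists_punish E hE own w T d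
  obtain ⟨s, hsdef⟩ : ∃ s : List V → V, s = fun l =>
      if ∃ m, l = histList π m then π l.length
      else if h2 : ∃ m', l.take (m' + 1) ≠ histList π m' then
        f (own (π (Nat.find h2 - 1))) (l.getLastD v0)
      else v0 := ⟨_, rfl⟩
  have hkey : ∀ (l : List V) (u : V), ¬(∃ m, l ++ [u] = histList π m) →
      ∃ m', (l ++ [u]).take (m' + 1) ≠ histList π m' := by
    intro l u h1
    refine ⟨(l ++ [u]).length - 1, fun hcon => h1 ⟨(l ++ [u]).length - 1, ?_⟩⟩
    have hlen : (l ++ [u]).length - 1 + 1 = (l ++ [u]).length := by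
      simp only [List.length_append, List.length_singleton]; omega
    rw [← hcon, hlen, List.take_length]
  have S1 : ∀ m, s (histList π m) = π (m + 1) := by
    intro m
    rw [hsdef]
    simp only
    rw [if_pos ⟨m, rfl⟩, histList_length]
  have S2 : ∀ j, IsStrategyFor E own j s := by
    intro j l u hchain howu
    rw [hsdef]
    simp only
    by_cases h1 : ∃ m, l ++ [u] = histList π m
    · rw [if_pos h1]
      obtain ⟨m, hm⟩ := h1
      have hu : u = π m := by
        have h3 := congrArg (fun l' => l'.getLastD v0) hm
        simp only [List.getLastD_concat] at h3
        rw [h3, histList_getLastD]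
      have hlm : (l ++ [u]).length = m + 1 := by rw [hm, histList_length]
      rw [hlm, hu]
      exact hπ m
    · rw [if_neg h1, dif_pos (hkey l u h1), List.getLastD_concat]
      exact hfE _ u
  refine ⟨fun _ => s, fun j => S2 j, hπ, h0, fun k => (S1 k).symm, ?_⟩
  intro i hi τ hτ π' hplay' hπ'0 hprof'
  by_cases hall : ∀ k, π' k = π k
  · rw [funext hall]
  push_neg at hall
  set K := Nat.find hall with hKdef
  have hK : π' K ≠ π K := Nat.find_spec hall
  have hKmin : ∀ m, m < K → π' m = π m := fun m hm => not_not.1 (Nat.find_min hall hm)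
  have hK0 : K ≠ 0 := fun h => hK (by rw [h, hπ'0, h0])
  obtain ⟨n, hn⟩ : ∃ n, K = n + 1 := ⟨K - 1, by omega⟩
  have hagr : ∀ j, j ≤ n → π' j = π j := fun j hj => hKmin j (by omega)
  have hdiff : π' (n + 1) ≠ π (n + 1) := by rw [← hn]; exact hK
  have hown : own (π n) = i := by
    by_contra hne
    have hc := hprof' n
    rw [histList_congr π' π n hagr, hagr n le_rfl, Function.update_of_ne hne] at hc
    exact hdiff (hc.trans (S1 n))
  have S3 : ∀ m, n + 1 ≤ m → s (histList π' m) = f (own (π n)) (π' m) := by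
    intro m hm
    have h1 : ¬ ∃ m', histList π' m = histList π m' := by
      rintro ⟨m', hm'⟩
      rw [histList_eq_iff] at hm'
      exact hdiff (hm'.2 (n + 1) (by omega))
    have h2 : ∃ m', (histList π' m).take (m' + 1) ≠ histList π m' := by
      refine ⟨n + 1, ?_⟩
      rw [histList_take π' (n + 1) m hm]
      intro hcon
      rw [histList_eq_iff] at hcon
      exact hdiff (hcon.2 (n + 1) le_rfl)
    have hfind : Nat.find h2 = n + 1 := by
      rw [Nat.find_eq_iff]
      constructor
      · rw [histList_take π' (n + 1) m hm]
        intro hcon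
        rw [histList_eq_iff] at hcon
        exact hdiff (hcon.2 (n + 1) le_rfl)
      · intro m' hm'
        rw [not_not, histList_take π' m' m (by omega)]
        exact histList_congr π' π m' fun j hj => hagr j (by omega)
    rw [hsdef]
    simp only
    rw [if_neg h1, dif_pos h2, hfind]
    simp only [Nat.add_sub_cancel, histList_getLastD]
  have hcoal : ∀ k, own (π' (n + 1 + k)) ≠ i → π' (n + 1 + k + 1) = f i (π' (n + 1 + k)) := by
    intro k hko
    have hc := hprof' (n + 1 + k)
    rw [Function.update_of_ne hko] at hc
    rw [S3 (n + 1 + k) (by omega), hown] at hc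
    exact hc
  have hXle : X i (π' (n + 1)) ≤ cost (w i) (T i) (fun m => π' (n + 1 + m)) := by
    have hp : IsPlay E (fun m => π' (n + 1 + m)) := by
      intro k
      show E (π' (n + 1 + k)) (π' (n + 1 + (k + 1)))
      rw [show n + 1 + (k + 1) = (n + 1 + k) + 1 by omega]
      exact hplay' (n + 1 + k)
    have hc : ∀ k, own ((fun m => π' (n + 1 + m)) k) ≠ i →
        (fun m => π' (n + 1 + m)) (k + 1) = f i ((fun m => π' (n + 1 + m)) k) := by
      intro k hko
      show π' (n + 1 + (k + 1)) = f i (π' (n + 1 + k))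
      rw [show n + 1 + (k + 1) = (n + 1 + k) + 1 by omega]
      exact hcoal k hko
    have := hPun i (fun m => π' (n + 1 + m)) hp hc
    simpa using this
  by_cases hhit : ∃ k ≤ n, π k ∈ T i
  · exact le_of_eq (cost_eq_of_agree (w i) (T i) hagr hhit).symm
  · have hno : ∀ k, k ≤ n → π k ∉ T i := fun k hk hkT => hhit ⟨k, hk, hkT⟩
    have hd1 : cost (w i) (T i) π
        = (pathWeight (w i) π n : ℕ∞) + cost (w i) (T i) (fun m => π (n + m)) :=
      cost_prefix _ _ n fun k hk => hno k (by omega)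
    have hVVn : cost (w i) (T i) (fun m => π (n + m)) ≤ Val E own w T i (π n) :=
      hVV i hi n hown fun ⟨k, hk, hkT⟩ => hno k (by omega) hkT
    have hd2 : cost (w i) (T i) π'
        = (pathWeight (w i) π' (n + 1) : ℕ∞) + cost (w i) (T i) (fun m => π' (n + 1 + m)) :=
      cost_prefix _ _ (n + 1) fun k hk => by
        rw [hagr k (by omega)]; exact hno k (by omega)
    have hpw' : pathWeight (w i) π' (n + 1)
        = pathWeight (w i) π n + w i (π n) (π' (n + 1)) := by
      have h4 : pathWeight (w i) π' (n + 1)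
          = pathWeight (w i) π' n + w i (π' n) (π' (n + 1)) := Finset.sum_range_succ _ n
      rw [h4, pathWeight_congr (w i) le_rfl hagr, hagr n le_rfl]
    have hEdev : E (π n) (π' (n + 1)) := by
      have := hplay' n
      rwa [hagr n le_rfl] at this
    have hBell' := hBell i (π n) (π' (n + 1)) (hno n le_rfl) hown hEdev
    calc cost (w i) (T i) π
        = (pathWeight (w i) π n : ℕ∞) + cost (w i) (T i) (fun m => π (n + m)) := hd1
      _ ≤ (pathWeight (w i) π n : ℕ∞) + X i (π n) :=
          add_le_add_right (le_trans hVVn (hXVal i (π n))) _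
      _ ≤ (pathWeight (w i) π n : ℕ∞) + ((w i (π n) (π' (n + 1)) : ℕ∞) + X i (π' (n + 1))) :=
          add_le_add_right hBell' _
      _ ≤ (pathWeight (w i) π n : ℕ∞)
          + ((w i (π n) (π' (n + 1)) : ℕ∞) + cost (w i) (T i) (fun m => π' (n + 1 + m))) :=
          add_le_add_right (add_le_add_right hXle _) _
      _ = cost (w i) (T i) π' := by
          rw [hd2, hpw']
          push_cast
          ring

/-- A play `π` from `v0` is the outcome of a `σ0`-fixed Nash equilibrium for some
strategy `σ0` of player 0 iff `π` is Visit `Val*`-consistent for the players `≠ 0`. -/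
theorem ne_outcome_characterization {V : Type*} [Fintype V] {t : ℕ}
    (E : V → V → Prop) (hE : ∀ u, ∃ v, E u v) (own : V → Fin (t + 1))
    (w : Fin (t + 1) → V → V → ℕ) (T : Fin (t + 1) → Set V) (v0 : V)
    (π : ℕ → V) (hπ : IsPlay E π) (h0 : π 0 = v0) :
    (∃ σ : Fin (t + 1) → List V → V, IsNE E own w T v0 σ π) ↔
      VisitValConsistent E own w T {i | i ≠ 0} π := by
  constructor
  · rintro ⟨σ, hstrats, hplayπ, hπ0, hprof, hNE⟩
    exact forward_dir E hE own w T v0 π hπ h0 σ hstrats hplayπ hprof hNE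
  · intro hVV
    exact backward_dir E hE own w T v0 π hπ h0 hVV
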